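/- Let A and B be finite nonempty index types, let φ : A → ℂ be a unit vector with rank-one projection Φ := φ φᴴ, let ω be a density matrix on B, and let τ be a density matrix on A × B. Then F(Φ ⊗ ω, τ) ≤ Re ⟨φ, (Tr₂ τ) · φ⟩, where ⊗ is the Kronecker product and Tr₂ is the partial trace over B. (Monotonicity of fidelity under the partial trace, for a pure first argument with product extension.) -/

import Mathlib

open Matrix Kronecker
open scoped ComplexOrder

open scoped Classical in
noncomputable def matSqrt {n : Type*} [Fintype n] [DecidableEq n] (A : Matrix n n ℂ) :
    Matrix n n ℂ :=
  if h : A.PosSemidef then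
    (h.1.eigenvectorUnitary : Matrix n n ℂ) * diagonal ((↑) ∘ (√·) ∘ h.1.eigenvalues) *
      (star (h.1.eigenvectorUnitary : Matrix n n ℂ))
  else 0

noncomputable def rootFidelity {n : Type*} [Fintype n] [DecidableEq n]
    (ρ σ : Matrix n n ℂ) : ℝ :=
  (matSqrt (matSqrt σ * ρ * matSqrt σ)).trace.re

noncomputable def fidelity {n : Type*} [Fintype n] [DecidableEq n]
    (ρ σ : Matrix n n ℂ) : ℝ :=
  (rootFidelity ρ σ) ^ 2

noncomputable def traceNorm {n : Type*} [Fintype n] [DecidableEq n] (A : Matrix n n ℂ) : ℝ :=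
  (matSqrt (Aᴴ * A)).trace.re

/-- The set of attainable type-II error values in hypothesis testing. -/
def testValues {n : Type*} [Fintype n] [DecidableEq n] (ρ σ : Matrix n n ℂ) (ε : ℝ) :
    Set ℝ :=
  { x | ∃ Λ : Matrix n n ℂ, Λ.PosSemidef ∧ (1 - Λ).PosSemidef ∧
      1 - ε ≤ (Λ * ρ).trace.re ∧ x = (Λ * σ).trace.re }

/-- ε-hypothesis-testing relative entropy. -/
noncomputable def Dh {n : Type*} [Fintype n] [DecidableEq n]
    (ρ σ : Matrix n n ℂ) (ε : ℝ) : ℝ :=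
  - Real.logb 2 (sInf (testValues ρ σ ε))

/-- GHZ unit vector. -/
noncomputable def ghz (M K : ℕ) : (Fin M → Fin K) → ℂ :=
  fun f => if ∃ c, ∀ m, f m = c then ((Real.sqrt K : ℂ))⁻¹ else 0

/-- GHZ rank-one projection. -/
noncomputable def ghzProj (M K : ℕ) : Matrix (Fin M → Fin K) (Fin M → Fin K) ℂ :=
  Matrix.vecMulVec (ghz M K) (star ∘ ghz M K)

/-- The twisting unitary. -/
def twist (M K d : ℕ)
    (U : (Fin M → Fin K) → Matrix (Fin M → Fin d) (Fin M → Fin d) ℂ) :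
    Matrix ((Fin M → Fin K) × (Fin M → Fin d)) ((Fin M → Fin K) × (Fin M → Fin d)) ℂ :=
  Matrix.of fun p q => if p.1 = q.1 then U p.1 p.2 q.2 else 0

/-- The privacy test `Π = W (Φ ⊗ 1) Wᴴ`. -/
noncomputable def privacyTest (M K d : ℕ)
    (U : (Fin M → Fin K) → Matrix (Fin M → Fin d) (Fin M → Fin d) ℂ) :
    Matrix ((Fin M → Fin K) × (Fin M → Fin d)) ((Fin M → Fin K) × (Fin M → Fin d)) ℂ :=
  twist M K d U * (ghzProj M K ⊗ₖ (1 : Matrix (Fin M → Fin d) (Fin M → Fin d) ℂ)) *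
    (twist M K d U)ᴴ

/-- The private state `γ = W (Φ ⊗ ω) Wᴴ`. -/
noncomputable def privateState (M K d : ℕ)
    (U : (Fin M → Fin K) → Matrix (Fin M → Fin d) (Fin M → Fin d) ℂ)
    (ω : Matrix (Fin M → Fin d) (Fin M → Fin d) ℂ) :
    Matrix ((Fin M → Fin K) × (Fin M → Fin d)) ((Fin M → Fin K) × (Fin M → Fin d)) ℂ :=
  twist M K d U * (ghzProj M K ⊗ₖ ω) * (twist M K d U)ᴴ

/-- A vector on `𝒦 × 𝒮` is product across the bipartition `J | Jᶜ` of the parties. -/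
def IsProductAcross {M K d : ℕ} (J : Set (Fin M))
    (v : (Fin M → Fin K) × (Fin M → Fin d) → ℂ) : Prop :=
  ∃ (v₁ : ((↥J) → Fin K) × ((↥J) → Fin d) → ℂ)
    (v₂ : ((↥(Jᶜ)) → Fin K) × ((↥(Jᶜ)) → Fin d) → ℂ),
    ∀ (f : Fin M → Fin K) (x : Fin M → Fin d),
      v (f, x) = v₁ (fun m => f m.1, fun m => x m.1) * v₂ (fun m => f m.1, fun m => x m.1)

/-- Biseparability: a finite convex combination of pure states, each product across
some nontrivial bipartition of the parties. -/
def Biseparable {M K d : ℕ}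
    (σ : Matrix ((Fin M → Fin K) × (Fin M → Fin d))
      ((Fin M → Fin K) × (Fin M → Fin d)) ℂ) : Prop :=
  ∃ (N : ℕ) (p : Fin N → ℝ) (w : Fin N → ((Fin M → Fin K) × (Fin M → Fin d)) → ℂ)
    (J : Fin N → Set (Fin M)),
    (∀ t, 0 ≤ p t) ∧ (∑ t, p t = 1) ∧
    (∀ t, ∑ i, ‖w t i‖ ^ 2 = 1) ∧
    (∀ t, J t ≠ ∅ ∧ J t ≠ Set.univ ∧ IsProductAcross (J t) (w t)) ∧
    σ = ∑ t, (p t : ℂ) • Matrix.vecMulVec (w t) (star ∘ w t)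

/-- Partial trace over the second tensor factor. -/
noncomputable def partialTrace₂ {A B : Type*} [Fintype B] (τ : Matrix (A × B) (A × B) ℂ) :
    Matrix A A ℂ :=
  Matrix.of fun a a' => ∑ b, τ (a, b) (a', b)

/-- Matrix logarithm of a Hermitian matrix via the spectral functional calculus. -/
noncomputable def matLog {n : Type*} [Fintype n] [DecidableEq n] (A : Matrix n n ℂ) :
    Matrix n n ℂ :=
  if hA : A.IsHermitian then
    (hA.eigenvectorUnitary : Matrix n n ℂ) *
      Matrix.diagonal (fun i => (Real.log (hA.eigenvalues i) : ℂ)) *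
      (star hA.eigenvectorUnitary : Matrix n n ℂ)
  else 0


set_option linter.unusedSectionVars false

section sqrtport
open scoped MatrixOrder

noncomputable abbrev Matrix.PosSemidef.sqrt {n : Type*} [Fintype n] [DecidableEq n]
    {A : Matrix n n ℂ} (h : A.PosSemidef) : Matrix n n ℂ :=
  (h.1.eigenvectorUnitary : Matrix n n ℂ) * diagonal ((↑) ∘ (√·) ∘ h.1.eigenvalues) *
    (star (h.1.eigenvectorUnitary : Matrix n n ℂ))

lemma Matrix.PosSemidef.sqrt_eq_cfc {n : Type*} [Fintype n] [DecidableEq n]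
    {A : Matrix n n ℂ} (h : A.PosSemidef) : h.sqrt = CFC.sqrt A := by
  rw [CFC.sqrt_eq_real_sqrt A h.nonneg, cfcₙ_eq_cfc, h.1.cfc_eq, Matrix.IsHermitian.cfc,
    Unitary.conjStarAlgAut_apply]
  rfl

lemma Matrix.PosSemidef.posSemidef_sqrt {n : Type*} [Fintype n] [DecidableEq n]
    {A : Matrix n n ℂ} (h : A.PosSemidef) : h.sqrt.PosSemidef := by
  rw [h.sqrt_eq_cfc]
  exact Matrix.nonneg_iff_posSemidef.mp (CFC.sqrt_nonneg A)

lemma Matrix.PosSemidef.sqrt_mul_self {n : Type*} [Fintype n] [DecidableEq n]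
    {A : Matrix n n ℂ} (h : A.PosSemidef) : h.sqrt * h.sqrt = A := by
  rw [h.sqrt_eq_cfc]
  exact CFC.sqrt_mul_sqrt_self A h.nonneg

lemma Matrix.PosSemidef.eq_sqrt_of_sq_eq {n : Type*} [Fintype n] [DecidableEq n]
    {B A : Matrix n n ℂ} (hB : B.PosSemidef) (hA : A.PosSemidef) (hBA : B ^ 2 = A) :
    B = hA.sqrt := by
  rw [hA.sqrt_eq_cfc, eq_comm, CFC.sqrt_eq_iff A B hA.nonneg hB.nonneg, ← sq, hBA]

end sqrtport

section kron
variable {m l : Type*} [Fintype m] [DecidableEq m] [Fintype l] [DecidableEq l]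

lemma kron_conjTranspose (A : Matrix m m ℂ) (B : Matrix l l ℂ) :
    (A ⊗ₖ B)ᴴ = Aᴴ ⊗ₖ Bᴴ := by
  ext ⟨i, j⟩ ⟨k, r⟩
  simp [Matrix.conjTranspose_apply, Matrix.kroneckerMap_apply, star_mul']

lemma posSemidef_kron {A : Matrix m m ℂ} {B : Matrix l l ℂ}
    (hA : A.PosSemidef) (hB : B.PosSemidef) : (A ⊗ₖ B).PosSemidef := by
  exact Matrix.PosSemidef.kronecker hA hB

end kron

section phi
variable {A : Type*} [Fintype A] [DecidableEq A] (φ : A → ℂ)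

lemma hphic (hφ : ∑ a, ‖φ a‖ ^ 2 = 1) : ∑ a, star (φ a) * φ a = 1 := by
  have h : ∀ a, star (φ a) * φ a = ((‖φ a‖ ^ 2 : ℝ) : ℂ) := by
    intro a
    rw [← starRingEnd_apply, ← Complex.normSq_eq_conj_mul_self, Complex.normSq_eq_norm_sq]
  rw [Finset.sum_congr rfl (fun a _ => h a), ← Complex.ofReal_sum, hφ, Complex.ofReal_one]

lemma PhiH : (Matrix.vecMulVec φ (star ∘ φ))ᴴ = Matrix.vecMulVec φ (star ∘ φ) := by
  ext i j
  simp [Matrix.conjTranspose_apply, Matrix.vecMulVec_apply, mul_comm]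

lemma Phi2 (hφ : ∑ a, ‖φ a‖ ^ 2 = 1) : Matrix.vecMulVec φ (star ∘ φ) * Matrix.vecMulVec φ (star ∘ φ)
    = Matrix.vecMulVec φ (star ∘ φ) := by
  ext i j
  simp only [Matrix.mul_apply, Matrix.vecMulVec_apply, Function.comp_apply, Pi.star_apply]
  calc ∑ k, φ i * star (φ k) * (φ k * star (φ j))
      = (φ i * star (φ j)) * ∑ k, star (φ k) * φ k := by
        rw [Finset.mul_sum]
        exact Finset.sum_congr rfl fun k _ => by ring
    _ = φ i * star (φ j) := by rw [hphic φ hφ, mul_one]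

lemma PhiTr (hφ : ∑ a, ‖φ a‖ ^ 2 = 1) : (Matrix.vecMulVec φ (star ∘ φ)).trace = 1 := by
  rw [Matrix.trace]
  simp only [Matrix.diag_apply, Matrix.vecMulVec_apply, Function.comp_apply, Pi.star_apply]
  rw [← hphic φ hφ]
  exact Finset.sum_congr rfl fun a _ => by ring

lemma PhiPSD : (Matrix.vecMulVec φ (star ∘ φ)).PosSemidef := by
  exact Matrix.posSemidef_vecMulVec_self_star φ
end phi

section helpers
variable {n : Type*} [Fintype n] [DecidableEq n]

local notation "⟪" x ", " y "⟫" => @inner ℂ _ _ x y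

noncomputable def toE (x : n → ℂ) : EuclideanSpace ℂ n := (WithLp.equiv 2 (n → ℂ)).symm x

lemma inner_toE (x y : n → ℂ) : ⟪toE x, toE y⟫ = star x ⬝ᵥ y := by
  rw [PiLp.inner_apply]
  simp only [RCLike.inner_apply, dotProduct, Pi.star_apply, starRingEnd_apply]
  exact Finset.sum_congr rfl fun i _ => mul_comm _ _

lemma norm_toE_sq (x : n → ℂ) : ‖toE x‖ ^ 2 = (star x ⬝ᵥ x).re := by
  rw [← inner_toE]
  exact (inner_self_eq_norm_sq (𝕜 := ℂ) (toE x)).symm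

omit [DecidableEq n] in
lemma norm_toE_sq' (x : n → ℂ) : ‖toE x‖ ^ 2 = ∑ i, ‖x i‖ ^ 2 := by
  rw [EuclideanSpace.norm_eq, Real.sq_sqrt]
  · rfl
  · positivity

lemma trace_sqrt {A : Matrix n n ℂ} (hA : A.PosSemidef) :
    hA.sqrt.trace = ∑ i, (Real.sqrt (hA.1.eigenvalues i) : ℂ) := by
  rw [Matrix.PosSemidef.sqrt, Matrix.trace_mul_cycle, Unitary.coe_star_mul_self, one_mul,
    Matrix.trace_diagonal]
  rfl

lemma sum_quadform_eigenbasis {M : Matrix n n ℂ} (hM : M.IsHermitian) (C : Matrix n n ℂ) :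
    ∑ i, star (⇑(hM.eigenvectorBasis i)) ⬝ᵥ (C *ᵥ ⇑(hM.eigenvectorBasis i)) = C.trace := by
  have h1 : ((star hM.eigenvectorUnitary : Matrix n n ℂ) * C *
      (hM.eigenvectorUnitary : Matrix n n ℂ)).trace = C.trace := by
    rw [Matrix.trace_mul_cycle, Matrix.mem_unitaryGroup_iff.mp hM.eigenvectorUnitary.2, one_mul]
  rw [← h1, Matrix.trace]
  refine Finset.sum_congr rfl fun j _ => ?_
  simp only [Matrix.diag_apply, Matrix.mul_apply, dotProduct, Matrix.mulVec,
    Matrix.star_apply, hM.eigenvectorUnitary_apply, Pi.star_apply, dotProduct,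
    Finset.sum_mul, Finset.mul_sum]
  rw [Finset.sum_comm]
  refine Finset.sum_congr rfl fun k _ => Finset.sum_congr rfl fun l _ => by ring

omit [DecidableEq n] in
lemma quad_move (C : Matrix n n ℂ) (x y : n → ℂ) :
    star (C *ᵥ x) ⬝ᵥ y = star x ⬝ᵥ (Cᴴ *ᵥ y) := by
  rw [Matrix.star_mulVec, ← dotProduct_mulVec]

lemma fidelity_le_trace_proj {ρ τ P : Matrix n n ℂ} (hρ : ρ.PosSemidef) (hτ : τ.PosSemidef)
    (hPH : Pᴴ = P) (hP2 : P * P = P) (hsP : hρ.sqrt * P = hρ.sqrt)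
    (hρtr : ρ.trace = 1) :
    fidelity ρ τ ≤ (P * τ).trace.re := by
  classical
  set R := hρ.sqrt with hRdef
  set T := hτ.sqrt with hTdef
  have hRH : Rᴴ = R := hρ.posSemidef_sqrt.1
  have hTH : Tᴴ = T := hτ.posSemidef_sqrt.1
  have hRR : R * R = ρ := hρ.sqrt_mul_self
  have hTT : T * T = τ := hτ.sqrt_mul_self
  have hM : (T * ρ * T).PosSemidef := by
    have := hρ.mul_mul_conjTranspose_same T
    rwa [hTH] at this
  -- identify fidelity with sum of sqrt-eigenvalues
  set μ : n → ℝ := hM.1.eigenvalues with hμdef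
  set s : n → ℝ := fun i => Real.sqrt (μ i) with hsdef
  have hμ0 : ∀ i, 0 ≤ μ i := hM.eigenvalues_nonneg
  have hs0 : ∀ i, 0 ≤ s i := fun i => Real.sqrt_nonneg _
  have hfid : fidelity ρ τ = (∑ i, s i) ^ 2 := by
    have hmτ : matSqrt τ = T := by rw [matSqrt, dif_pos hτ]
    rw [fidelity, rootFidelity, hmτ, matSqrt, dif_pos hM, trace_sqrt hM]
    congr 1
    rw [Complex.re_sum]
    simp
    rfl
  set v : n → (n → ℂ) := fun i => ⇑(hM.1.eigenvectorBasis i) with hvdef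
  have heig : ∀ i, (T * ρ * T) *ᵥ v i = ((μ i : ℝ) : ℂ) • v i := by
    intro i
    rw [show ((μ i : ℝ) : ℂ) • v i = (μ i : ℝ) • v i from
      (RCLike.real_smul_eq_coe_smul (K := ℂ) _ _).symm]
    exact hM.1.mulVec_eigenvectorBasis i
  have horth : ∀ i j, star (v i) ⬝ᵥ v j = if i = j then 1 else 0 := by
    intro i j
    have h := orthonormal_iff_ite.mp hM.1.eigenvectorBasis.orthonormal i j
    rw [show (⟪hM.1.eigenvectorBasis i, hM.1.eigenvectorBasis j⟫ : ℂ)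
        = ⟪toE (v i), toE (v j)⟫ from rfl, inner_toE] at h
    exact h
  set X : Matrix n n ℂ := R * T with hXdef
  have hXX : Xᴴ * X = T * ρ * T := by
    rw [hXdef, conjTranspose_mul, hRH, hTH, Matrix.mul_assoc, ← Matrix.mul_assoc R R T, hRR,
      ← Matrix.mul_assoc]
  have hXvij : ∀ i j, star (X *ᵥ v i) ⬝ᵥ (X *ᵥ v j) = if i = j then ((μ j : ℝ) : ℂ) else 0 := by
    intro i j
    rw [quad_move, Matrix.mulVec_mulVec, hXX, heig, dotProduct_smul, horth]
    by_cases h : i = j <;> simp [h]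
  set u : n → (n → ℂ) := fun i => (((s i : ℝ) : ℂ))⁻¹ • (X *ᵥ v i) with hudef
  set w : n → (n → ℂ) := fun i => (P * T) *ᵥ v i with hwdef
  set α : n → ℝ := fun i => ‖toE (R *ᵥ u i)‖ with hαdef
  set β : n → ℝ := fun i => ‖toE (w i)‖ with hβdef
  have hu0 : ∀ i, μ i = 0 → u i = 0 := by
    intro i hi
    simp [hudef, hsdef, hi]
  -- claim 1
  have claim1 : ∀ i, s i ≤ α i * β i := by
    intro i
    by_cases hi : μ i = 0
    · rw [hsdef]
      simp only [hi, Real.sqrt_zero]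
      exact mul_nonneg (norm_nonneg _) (norm_nonneg _)
    have hμpos : 0 < μ i := lt_of_le_of_ne (hμ0 i) (Ne.symm hi)
    have hspos : 0 < s i := Real.sqrt_pos.2 hμpos
    have hXw : X *ᵥ v i = R *ᵥ w i := by
      rw [hwdef]
      dsimp only
      rw [Matrix.mulVec_mulVec, ← Matrix.mul_assoc, hsP]
    have key : star (u i) ⬝ᵥ (X *ᵥ v i) = ((s i : ℝ) : ℂ) := by
      rw [hudef]
      dsimp only
      rw [star_smul, smul_dotProduct, hXvij i i, if_pos rfl]
      have hsne : ((s i : ℝ) : ℂ) ≠ 0 := by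
        exact_mod_cast ne_of_gt hspos
      have hμs : ((μ i : ℝ) : ℂ) = ((s i : ℝ) : ℂ) * ((s i : ℝ) : ℂ) := by
        rw [← Complex.ofReal_mul, Real.mul_self_sqrt (hμ0 i)]
      rw [hμs]
      simp only [star_inv₀, Complex.star_def, Complex.conj_ofReal, smul_eq_mul]
      field_simp
    have key2 : star (R *ᵥ u i) ⬝ᵥ w i = ((s i : ℝ) : ℂ) := by
      rw [quad_move, hRH, ← hXw, key]
    have := re_inner_le_norm (𝕜 := ℂ) (toE (R *ᵥ u i)) (toE (w i))
    rw [inner_toE, key2] at this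
    simpa using this
  -- claim 2
  have claim2 : ∑ i, β i ^ 2 = (P * τ).trace.re := by
    have hC : (P * T)ᴴ * (P * T) = T * P * T := by
      rw [conjTranspose_mul, hPH, hTH, Matrix.mul_assoc, ← Matrix.mul_assoc P P T, hP2,
        ← Matrix.mul_assoc]
    have h1 : ∀ i, β i ^ 2 = (star (v i) ⬝ᵥ ((T * P * T) *ᵥ v i)).re := by
      intro i
      rw [hβdef]
      dsimp only
      rw [norm_toE_sq, hwdef]
      dsimp only
      rw [quad_move, Matrix.mulVec_mulVec, hC]
    have h2 : ∑ i, star (v i) ⬝ᵥ ((T * P * T) *ᵥ v i) = (T * P * T).trace :=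
      sum_quadform_eigenbasis hM.1 (T * P * T)
    have h3 : (T * P * T).trace = (P * τ).trace := by
      rw [Matrix.trace_mul_cycle, hTT, Matrix.trace_mul_comm]
    calc ∑ i, β i ^ 2 = (∑ i, star (v i) ⬝ᵥ ((T * P * T) *ᵥ v i)).re := by
          rw [Complex.re_sum]; exact Finset.sum_congr rfl fun i _ => h1 i
      _ = (P * τ).trace.re := by rw [h2, h3]
  -- claim 3
  have claim3 : ∑ i, α i ^ 2 ≤ 1 := by
    set c : n → (n → ℂ) := fun k => star (fun l => R k l) with hcdef
    -- coordinates of R *ᵥ x are inner products with the c k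
    have hcoord : ∀ (x : n → ℂ) (k : n), (R *ᵥ x) k = ⟪toE (c k), toE x⟫ := by
      intro x k
      rw [inner_toE]
      simp [hcdef, Matrix.mulVec, dotProduct]
    -- the u i for μ i ≠ 0 form an orthonormal family
    have honfam : Orthonormal ℂ (fun i : {i : n // μ i ≠ 0} => toE (u i.1)) := by
      rw [orthonormal_iff_ite]
      rintro ⟨i, hi⟩ ⟨j, hj⟩
      rw [inner_toE, hudef]
      dsimp only
      rw [star_smul, smul_dotProduct, dotProduct_smul, hXvij i j]
      by_cases h : i = j
      · subst h
        simp only [if_pos rfl, Subtype.mk.injEq]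
        have hμpos : 0 < μ i := lt_of_le_of_ne (hμ0 i) (Ne.symm hi)
        have hspos : 0 < s i := Real.sqrt_pos.2 hμpos
        have hsne : ((s i : ℝ) : ℂ) ≠ 0 := by exact_mod_cast ne_of_gt hspos
        have hμs : ((μ i : ℝ) : ℂ) = ((s i : ℝ) : ℂ) * ((s i : ℝ) : ℂ) := by
          rw [← Complex.ofReal_mul, Real.mul_self_sqrt (hμ0 i)]
        rw [hμs]
        simp only [star_inv₀, Complex.star_def, Complex.conj_ofReal, smul_eq_mul]
        field_simp
        simp
      · have : (⟨i, hi⟩ : {i : n // μ i ≠ 0}) ≠ ⟨j, hj⟩ := by simpa using h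
        rw [if_neg h, if_neg this]
        simp
    -- Bessel, coordinatewise
    have hα0 : ∀ i, μ i = 0 → α i = 0 := by
      intro i hi
      rw [hαdef]
      simp [hu0 i hi, toE]
    have hαsub : ∑ i, α i ^ 2 = ∑ i : {i : n // μ i ≠ 0}, α i.1 ^ 2 := by
      rw [← Finset.sum_subtype (Finset.univ.filter (fun i => μ i ≠ 0))
        (by intro x; simp) (fun i => α i ^ 2)]
      rw [← Finset.sum_filter_add_sum_filter_not Finset.univ (fun i => μ i ≠ 0)
        (fun i => α i ^ 2)]
      have : ∑ i ∈ Finset.univ.filter (fun i => ¬ μ i ≠ 0), α i ^ 2 = 0 := by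
        apply Finset.sum_eq_zero
        intro i hi
        simp only [Finset.mem_filter, not_not] at hi
        rw [hα0 i hi.2]
        ring
      rw [this, add_zero]
    have hbessel : ∀ k, ∑ i : {i : n // μ i ≠ 0}, ‖⟪toE (c k), toE (u i.1)⟫‖ ^ 2
        ≤ ‖toE (c k)‖ ^ 2 := by
      intro k
      have h := honfam.sum_inner_products_le (s := Finset.univ) (toE (c k))
      calc ∑ i : {i : n // μ i ≠ 0}, ‖⟪toE (c k), toE (u i.1)⟫‖ ^ 2
          = ∑ i : {i : n // μ i ≠ 0}, ‖⟪toE (u i.1), toE (c k)⟫‖ ^ 2 := by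
            refine Finset.sum_congr rfl fun i _ => ?_
            rw [← inner_conj_symm (toE (u i.1)) (toE (c k)), RCLike.norm_conj]
        _ ≤ ‖toE (c k)‖ ^ 2 := h
    have hαval : ∀ i : {i : n // μ i ≠ 0}, α i.1 ^ 2
        = ∑ k, ‖⟪toE (c k), toE (u i.1)⟫‖ ^ 2 := by
      intro i
      rw [hαdef]
      dsimp only
      rw [norm_toE_sq']
      exact Finset.sum_congr rfl fun k _ => by rw [hcoord (u i.1) k]
    have htrρ : ∑ k, ‖toE (c k)‖ ^ 2 = 1 := by
      have h1 : ∀ k, ‖toE (c k)‖ ^ 2 = ∑ l, ‖R k l‖ ^ 2 := by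
        intro k
        rw [norm_toE_sq']
        exact Finset.sum_congr rfl fun l _ => by simp [hcdef]
      have h2 : (ρ.trace).re = ∑ k, ∑ l, ‖R k l‖ ^ 2 := by
        conv_lhs => rw [← hRR]
        rw [Matrix.trace, Complex.re_sum]
        refine Finset.sum_congr rfl fun k _ => ?_
        rw [Matrix.diag_apply, Matrix.mul_apply, Complex.re_sum]
        refine Finset.sum_congr rfl fun l _ => ?_
        have hrc : R l k = starRingEnd ℂ (R k l) := by
          conv_lhs => rw [← hRH]
          rfl
        rw [hrc, Complex.mul_conj]
        rw [Complex.ofReal_re, Complex.sq_norm]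
      calc ∑ k, ‖toE (c k)‖ ^ 2 = ∑ k, ∑ l, ‖R k l‖ ^ 2 :=
            Finset.sum_congr rfl fun k _ => h1 k
        _ = (ρ.trace).re := h2.symm
        _ = 1 := by rw [hρtr]; rfl
    rw [hαsub, ← htrρ]
    calc ∑ i : {i : n // μ i ≠ 0}, α i.1 ^ 2
        = ∑ i : {i : n // μ i ≠ 0}, ∑ k, ‖⟪toE (c k), toE (u i.1)⟫‖ ^ 2 :=
          Finset.sum_congr rfl fun i _ => hαval i
      _ = ∑ k, ∑ i : {i : n // μ i ≠ 0}, ‖⟪toE (c k), toE (u i.1)⟫‖ ^ 2 := Finset.sum_comm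
      _ ≤ ∑ k, ‖toE (c k)‖ ^ 2 := Finset.sum_le_sum fun k _ => hbessel k
  -- assemble
  have hβsq : ∀ i, 0 ≤ β i ^ 2 := fun i => sq_nonneg _
  have hRHS0 : 0 ≤ (P * τ).trace.re := by
    rw [← claim2]; exact Finset.sum_nonneg fun i _ => hβsq i
  have step1 : (∑ i, s i) ^ 2 ≤ (∑ i, α i * β i) ^ 2 := by
    apply pow_le_pow_left₀ (Finset.sum_nonneg fun i _ => hs0 i)
    exact Finset.sum_le_sum fun i _ => claim1 i
  have step2 : (∑ i, α i * β i) ^ 2 ≤ (∑ i, α i ^ 2) * ∑ i, β i ^ 2 :=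
    Finset.sum_mul_sq_le_sq_mul_sq _ _ _
  have step3 : (∑ i, α i ^ 2) * (∑ i, β i ^ 2) ≤ 1 * (P * τ).trace.re := by
    rw [claim2]
    exact mul_le_mul_of_nonneg_right claim3 hRHS0
  rw [hfid]
  calc (∑ i, s i) ^ 2 ≤ (∑ i, α i * β i) ^ 2 := step1
    _ ≤ (∑ i, α i ^ 2) * ∑ i, β i ^ 2 := step2
    _ ≤ 1 * (P * τ).trace.re := step3
    _ = (P * τ).trace.re := one_mul _

end helpers

/-- monotonicity of fidelity under the partial trace, for a pure first
argument with product extension: `F(Φ ⊗ ω, τ) ≤ Re ⟨φ, (Tr₂ τ) φ⟩`. -/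
theorem stmt_3 (A B : Type*) [Fintype A] [DecidableEq A] [Nonempty A]
    [Fintype B] [DecidableEq B] [Nonempty B]
    (φ : A → ℂ) (hφ : ∑ a, ‖φ a‖ ^ 2 = 1)
    (ω : Matrix B B ℂ) (hω : ω.PosSemidef) (hωtr : ω.trace = 1)
    (τ : Matrix (A × B) (A × B) ℂ) (hτ : τ.PosSemidef) (hτtr : τ.trace = 1) :
    fidelity (Matrix.vecMulVec φ (star ∘ φ) ⊗ₖ ω) τ ≤
      (star φ ⬝ᵥ (partialTrace₂ τ).mulVec φ).re := by
  classical
  have hΦpsd := PhiPSD φ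
  set Φ := Matrix.vecMulVec φ (star ∘ φ) with hΦdef
  have hρ : (Φ ⊗ₖ ω).PosSemidef := posSemidef_kron hΦpsd hω
  have hsqrt : hρ.sqrt = Φ ⊗ₖ hω.sqrt := by
    refine (Matrix.PosSemidef.eq_sqrt_of_sq_eq
      (posSemidef_kron hΦpsd hω.posSemidef_sqrt) hρ ?_).symm
    rw [pow_two, ← Matrix.mul_kronecker_mul, Phi2 φ hφ, hω.sqrt_mul_self]
  have hPH : (Φ ⊗ₖ (1 : Matrix B B ℂ))ᴴ = Φ ⊗ₖ (1 : Matrix B B ℂ) := by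
    rw [kron_conjTranspose, PhiH, Matrix.conjTranspose_one]
  have hP2 : (Φ ⊗ₖ (1 : Matrix B B ℂ)) * (Φ ⊗ₖ (1 : Matrix B B ℂ))
      = Φ ⊗ₖ (1 : Matrix B B ℂ) := by
    rw [← Matrix.mul_kronecker_mul, Phi2 φ hφ, one_mul]
  have hsP : hρ.sqrt * (Φ ⊗ₖ (1 : Matrix B B ℂ)) = hρ.sqrt := by
    rw [hsqrt, ← Matrix.mul_kronecker_mul, Phi2 φ hφ, mul_one]
  have hρtr : (Φ ⊗ₖ ω).trace = 1 := by
    rw [Matrix.trace_kronecker, PhiTr φ hφ, hωtr, one_mul]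
  have main := fidelity_le_trace_proj hρ hτ hPH hP2 hsP hρtr
  have hid : ((Φ ⊗ₖ (1 : Matrix B B ℂ)) * τ).trace
      = star φ ⬝ᵥ (partialTrace₂ τ).mulVec φ := by
    rw [Matrix.trace]
    simp only [hΦdef]
    simp only [Matrix.diag_apply, Matrix.mul_apply, Fintype.sum_prod_type,
      Matrix.kroneckerMap_apply, Matrix.vecMulVec_apply, Function.comp_apply, Pi.star_apply,
      Matrix.one_apply, mul_ite, mul_one, mul_zero, ite_mul, zero_mul, Finset.sum_ite_eq',
      Finset.sum_ite_eq, Finset.mem_univ, if_true]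
    simp only [dotProduct, Matrix.mulVec, partialTrace₂, Matrix.of_apply, Pi.star_apply,
      dotProduct, Finset.mul_sum, Finset.sum_mul]
    conv_rhs => rw [Finset.sum_comm]
    refine Finset.sum_congr rfl fun a _ => ?_
    rw [Finset.sum_comm]
    refine Finset.sum_congr rfl fun a' _ => Finset.sum_congr rfl fun b _ => by ring
  rw [← hid]
  exact main
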